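/- Let n ≥ 1, let B be the open unit ball in ℝⁿ, and let 𝓕 be a nonempty family of homeomorphisms of ℝⁿ onto ℝⁿ that is closed under composition and such that B ⊆ f(B) for every f ∈ 𝓕. Suppose g ∈ 𝓕 satisfies: the Lebesgue measure of g(B) is finite, and volume(f(B)) ≤ volume(g(B)) for all f ∈ 𝓕. Then g(B) = B. -/

import Mathlib

open MeasureTheory

theorem stmt_7 (n : ℕ) (hn : 1 ≤ n)
    (B : Set (EuclideanSpace ℝ (Fin n)))
    (hB : B = Metric.ball (0 : EuclideanSpace ℝ (Fin n)) 1)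
    (𝓕 : Set (EuclideanSpace ℝ (Fin n) ≃ₜ EuclideanSpace ℝ (Fin n)))
    (hne : 𝓕.Nonempty)
    (hcomp : ∀ f ∈ 𝓕, ∀ g ∈ 𝓕, f.trans g ∈ 𝓕)
    (hsub : ∀ f ∈ 𝓕, B ⊆ f '' B)
    (g : EuclideanSpace ℝ (Fin n) ≃ₜ EuclideanSpace ℝ (Fin n)) (hg : g ∈ 𝓕)
    (hfin : volume (g '' B) ≠ ⊤)
    (hmax : ∀ f ∈ 𝓕, volume (f '' B) ≤ volume (g '' B)) :
    g '' B = B := by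
  by_contra hne'
  have hBsub : B ⊆ g '' B := hsub g hg
  have hx : ∃ x ∈ g '' B, x ∉ B := by
    by_contra h
    push_neg at h
    exact hne' (Set.Subset.antisymm h hBsub)
  obtain ⟨x, hxg, hxB⟩ := hx
  have hVopen : IsOpen (g '' B) :=
    g.isOpen_image.mpr (hB ▸ Metric.isOpen_ball)
  -- find y ∈ g '' B with ‖y‖ > 1
  have hy : ∃ y ∈ g '' B, 1 < ‖y‖ := by
    obtain ⟨ε, hε, hball⟩ := Metric.isOpen_iff.mp hVopen x hxg
    have hxn : 1 ≤ ‖x‖ := by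
      by_contra h
      push_neg at h
      exact hxB (by rw [hB]; simpa [Metric.mem_ball, dist_zero_right] using h)
    rcases lt_or_eq_of_le hxn with h1 | h1
    · exact ⟨x, hxg, h1⟩
    · refine ⟨(1 + ε / 2) • x, hball ?_, ?_⟩
      · rw [Metric.mem_ball, dist_eq_norm]
        have : (1 + ε / 2) • x - x = (ε / 2) • x := by
          rw [add_smul, one_smul]; abel
        rw [this, norm_smul, ← h1]
        simp only [Real.norm_eq_abs, abs_of_pos (by linarith : (0:ℝ) < ε / 2), mul_one]
        linarith
      · rw [norm_smul, ← h1, mul_one, Real.norm_eq_abs,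
          abs_of_pos (by linarith : (0:ℝ) < 1 + ε / 2)]
        linarith
  obtain ⟨y, hyg, hyn⟩ := hy
  obtain ⟨δ₁, hδ₁, hb1⟩ := Metric.isOpen_iff.mp hVopen y hyg
  set δ : ℝ := min δ₁ (‖y‖ - 1) with hδdef
  have hδ : 0 < δ := lt_min hδ₁ (by linarith)
  have hUsub : Metric.ball y δ ⊆ g '' B \ B := by
    intro z hz
    rw [Metric.mem_ball] at hz
    constructor
    · exact hb1 (Metric.mem_ball.mpr (lt_of_lt_of_le hz (min_le_left _ _)))
    · rw [hB]
      simp only [Metric.mem_ball, dist_zero_right]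
      push_neg
      have h2 : dist z y < ‖y‖ - 1 := lt_of_lt_of_le hz (min_le_right _ _)
      have h3 : ‖y‖ - ‖z‖ ≤ dist z y := by
        rw [dist_eq_norm]
        calc ‖y‖ - ‖z‖ ≤ ‖y - z‖ := by
              have := norm_sub_norm_le y z; linarith
          _ = ‖z - y‖ := norm_sub_rev _ _
      linarith
  -- measurability
  have hmB : MeasurableSet B := hB ▸ measurableSet_ball
  have hmV : MeasurableSet (g '' B) := hVopen.measurableSet
  have hmD : MeasurableSet (g '' (g '' B \ B)) :=
    g.measurableEmbedding.measurableSet_image.mpr (hmV.diff hmB)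
  -- decomposition
  have hdecomp : g '' (g '' B) = g '' (g '' B \ B) ∪ g '' B := by
    rw [← Set.image_union, Set.diff_union_of_subset hBsub]
  have hdisj : Disjoint (g '' (g '' B \ B)) (g '' B) :=
    (Set.disjoint_image_iff g.injective).mpr Set.disjoint_sdiff_left
  have hmeas : volume (g '' (g '' B)) =
      volume (g '' (g '' B \ B)) + volume (g '' B) := by
    rw [hdecomp, measure_union hdisj hmV]
  -- positivity
  have hpos : 0 < volume (g '' (g '' B \ B)) := by
    have hopen : IsOpen (g '' Metric.ball y δ) :=
      g.isOpen_image.mpr Metric.isOpen_ball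
    have hnonempty : (g '' Metric.ball y δ).Nonempty :=
      (Metric.nonempty_ball.mpr hδ).image g
    calc (0 : ENNReal) < volume (g '' Metric.ball y δ) :=
          hopen.measure_pos volume hnonempty
      _ ≤ volume (g '' (g '' B \ B)) :=
          measure_mono (Set.image_mono hUsub)
  -- contradiction with maximality
  have hle := hmax (g.trans g) (hcomp g hg g hg)
  have himg : (g.trans g) '' B = g '' (g '' B) := by
    ext z; simp [Homeomorph.trans_apply, Set.image_image]
  rw [himg, hmeas] at hle
  have : volume (g '' (g '' B \ B)) ≤ 0 := by
    have h0 : volume (g '' (g '' B \ B)) + volume (g '' B) ≤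
        0 + volume (g '' B) := by simpa using hle
    exact (ENNReal.add_le_add_iff_right hfin).mp h0
  exact absurd (le_antisymm this zero_le) (ne_of_gt hpos)
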